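/- There exist 3×3 nonnegative matrices C and D (with columns of C summing to 1 and rows of D summing to 1, and C_{ij} = 0 iff D_{ij} = 0) that satisfy all degree-4 odds-ratio binomials C_{i1j1}C_{i2j2}D_{i1j2}D_{i2j1} = C_{i1j2}C_{i2j1}D_{i1j1}D_{i2j2}, yet are not compatible conditionals. Specifically, C with rows (1/2,1/2,0),(0,1/2,1/2),(1/2,0,1/2) and D with rows (1/3,2/3,0),(0,1/3,2/3),(1/3,0,2/3) satisfy all degree-4 binomials but fail the degree-6 binomial C_{11}C_{22}C_{33}D_{12}D_{23}D_{31} = C_{12}C_{23}C_{31}D_{11}D_{22}D_{33}, hence no joint distribution P has C and D as its conditionals. -/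

import Mathlib

set_option autoImplicit false
set_option maxHeartbeats 2000000

open Matrix

/-- The specific matrix `C` from the example of Arnold, Castillo and Sarabia. -/
noncomputable def Cex : Matrix (Fin 3) (Fin 3) ℝ :=
  !![1/2, 1/2, 0; 0, 1/2, 1/2; 1/2, 0, 1/2]

/-- The specific matrix `D` from the example. -/
noncomputable def Dex : Matrix (Fin 3) (Fin 3) ℝ :=
  !![1/3, 2/3, 0; 0, 1/3, 2/3; 1/3, 0, 2/3]

/-- `Cex` and `Dex` are nonnegative, have the correct sums and common support,
satisfy all degree-4 odds-ratio binomials, yet fail a degree-6 circuit binomial and are not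
compatible conditionals: no joint distribution `P` has them as its conditional arrays. -/
theorem incompatible_despite_odds_ratios :
    (∀ i j, 0 ≤ Cex i j) ∧ (∀ i j, 0 ≤ Dex i j) ∧
    (∀ j, ∑ i, Cex i j = 1) ∧ (∀ i, ∑ j, Dex i j = 1) ∧
    (∀ i j, Cex i j = 0 ↔ Dex i j = 0) ∧
    (∀ (i1 i2 j1 j2 : Fin 3),
      Cex i1 j1 * Cex i2 j2 * Dex i1 j2 * Dex i2 j1
        = Cex i1 j2 * Cex i2 j1 * Dex i1 j1 * Dex i2 j2) ∧
    (Cex 0 0 * Cex 1 1 * Cex 2 2 * Dex 0 1 * Dex 1 2 * Dex 2 0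
      ≠ Cex 0 1 * Cex 1 2 * Cex 2 0 * Dex 0 0 * Dex 1 1 * Dex 2 2) ∧
    ¬ (∃ P : Matrix (Fin 3) (Fin 3) ℝ,
        (∀ i j, 0 ≤ P i j) ∧ (∑ i, ∑ j, P i j = 1) ∧
        (∀ i j, (0 < ∑ k, P k j) → Cex i j = P i j / ∑ k, P k j) ∧
        (∀ i j, (0 < ∑ l, P i l) → Dex i j = P i j / ∑ l, P i l) ∧
        (∀ i j, P i j = 0 → Cex i j = 0 ∧ Dex i j = 0)) := by
  refine ⟨?_, ?_, ?_, ?_, ?_, ?_, ?_, ?_⟩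
  · intro i j; fin_cases i <;> fin_cases j <;> norm_num [Cex]
  · intro i j; fin_cases i <;> fin_cases j <;> norm_num [Dex]
  · intro j; rw [Fin.sum_univ_three]; fin_cases j <;>
      norm_num [Cex, Matrix.cons_val_zero, Matrix.cons_val_one, Matrix.head_cons,
        Matrix.vecHead, Matrix.vecTail, Matrix.cons_val_two]
  · intro i; rw [Fin.sum_univ_three]; fin_cases i <;>
      norm_num [Dex, Matrix.cons_val_zero, Matrix.cons_val_one, Matrix.head_cons,
        Matrix.vecHead, Matrix.vecTail, Matrix.cons_val_two]
  · intro i j; fin_cases i <;> fin_cases j <;> norm_num [Cex, Dex]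
  · intro i1 i2 j1 j2
    fin_cases i1 <;> fin_cases i2 <;> fin_cases j1 <;> fin_cases j2 <;>
      norm_num [Cex, Dex, Matrix.cons_val_zero, Matrix.cons_val_one, Matrix.head_cons,
        Matrix.vecHead, Matrix.vecTail]
  · norm_num [Cex, Dex, Matrix.cons_val_zero, Matrix.cons_val_one, Matrix.head_cons,
      Matrix.vecHead, Matrix.vecTail, Matrix.cons_val_two]
  · rintro ⟨P, hP, hsum, hC, hD, hz⟩
    -- row sums positive
    have hrow : ∀ i : Fin 3, (0 < ∑ l, P i l) := by
      intro i
      rcases lt_or_eq_of_le (Finset.sum_nonneg fun l _ => hP i l) with h | h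
      · exact h
      · exfalso
        have hall : ∀ l, P i l = 0 := by
          intro l
          have := (Finset.sum_eq_zero_iff_of_nonneg (fun l _ => hP i l)).mp h.symm
          exact this l (Finset.mem_univ l)
        fin_cases i
        · have := (hz 0 0 (hall 0)).2; norm_num [Dex] at this
        · have := (hz 1 1 (hall 1)).2; norm_num [Dex] at this
        · have := (hz 2 0 (hall 0)).2; norm_num [Dex, Matrix.cons_val_two] at this
    have hcol : ∀ j : Fin 3, (0 < ∑ k, P k j) := by
      intro j
      rcases lt_or_eq_of_le (Finset.sum_nonneg fun k _ => hP k j) with h | h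
      · exact h
      · exfalso
        have hall : ∀ k, P k j = 0 := by
          intro k
          have := (Finset.sum_eq_zero_iff_of_nonneg (fun k _ => hP k j)).mp h.symm
          exact this k (Finset.mem_univ k)
        fin_cases j
        · have := (hz 0 0 (hall 0)).1; norm_num [Cex] at this
        · have := (hz 0 1 (hall 0)).1; norm_num [Cex] at this
        · have := (hz 1 2 (hall 1)).1; norm_num [Cex, Matrix.cons_val_two] at this
    have hCeq : ∀ i j, P i j = Cex i j * ∑ k, P k j := by
      intro i j
      exact ((div_eq_iff (ne_of_gt (hcol j))).mp (hC i j (hcol j)).symm)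
    have hDeq : ∀ i j, P i j = Dex i j * ∑ l, P i l := by
      intro i j
      exact ((div_eq_iff (ne_of_gt (hrow i))).mp (hD i j (hrow i)).symm)
    -- abbreviations
    set r0 := ∑ l, P 0 l with hr0
    set r1 := ∑ l, P 1 l with hr1
    set r2 := ∑ l, P 2 l with hr2
    have e01C := hCeq 0 1; have e01D := hDeq 0 1
    have e11C := hCeq 1 1; have e11D := hDeq 1 1
    have e00C := hCeq 0 0; have e00D := hDeq 0 0
    have e20C := hCeq 2 0; have e20D := hDeq 2 0
    have e12C := hCeq 1 2; have e12D := hDeq 1 2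
    have e22C := hCeq 2 2; have e22D := hDeq 2 2
    norm_num [Cex, Dex, Matrix.cons_val_zero, Matrix.cons_val_one, Matrix.head_cons,
      Matrix.vecHead, Matrix.vecTail, Fin.sum_univ_three, Matrix.cons_val_two]
      at e01C e01D e11C e11D e00C e00D e20C e20D e12C e12D e22C e22D
    have h0 := hrow 0
    rw [Fin.sum_univ_three] at h0
    -- derive contradiction
    linarith [e01C, e01D, e11C, e11D, e00C, e00D, e20C, e20D, e12C, e12D, e22C, e22D]
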